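/- Let Γ = ⟨a, b, c | a³ = b² = c² = 1, bab = a², bc = cb⟩ ≅ D₃ *_{C₂} D₂. The map a ↦ (a,1), b ↦ (b,1), c ↦ (1,−1) defines a surjective homomorphism φ : Γ → D₃ × C₂ that is injective on ⟨a,b⟩ and on ⟨b,c⟩; its kernel is a torsion-free normal subgroup of index 12, which is a free group of rank 2. -/

import Mathlib

/-- The relations of `Γ = ⟨a, b, c | a³ = b² = c² = 1, bab = a², bc = cb⟩ ≅ D₃ *_{C₂} D₂`. -/
def amalgamRels : Set (FreeGroup (Fin 3)) :=
  { (FreeGroup.of 0) ^ 3, (FreeGroup.of 1) ^ 2, (FreeGroup.of 2) ^ 2,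
    FreeGroup.of 1 * FreeGroup.of 0 * FreeGroup.of 1 * ((FreeGroup.of 0) ^ 2)⁻¹,
    FreeGroup.of 1 * FreeGroup.of 2 * (FreeGroup.of 1)⁻¹ * (FreeGroup.of 2)⁻¹ }

/-- A monoid is torsion-free if every non-identity element has infinite order
(the definition `Monoid.IsTorsionFree` of Mathlib of December 2024, since removed). -/
def Monoid.IsTorsionFree (G : Type*) [Monoid G] : Prop :=
  ∀ g : G, g ≠ 1 → ¬IsOfFinOrder g

/-! ### Generic auxiliary lemmas -/

lemma freeGroup_subsingleton {ι : Type*} [IsEmpty ι] : Subsingleton (FreeGroup ι) := by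
  have key : ∀ x : FreeGroup ι, x = 1 := by
    intro x
    induction x using FreeGroup.induction_on with
    | C1 => rfl
    | of i => exact (IsEmpty.false i).elim
    | inv_of i _ => exact (IsEmpty.false i).elim
    | mul a b ha hb => rw [ha, hb, one_mul]
  exact ⟨fun a b => (key a).trans (key b).symm⟩

/-- Free groups are torsion-free (via Nielsen–Schreier applied to the cyclic subgroup generated
by a torsion element). -/
lemma freeGroup_isTorsionFree (β : Type*) : Monoid.IsTorsionFree (FreeGroup β) := by
  intro x hx hfin
  set H := Subgroup.zpowers x with hH
  have hxH : x ∈ H := Subgroup.mem_zpowers x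
  have htors : ∀ g : H, IsOfFinOrder g := by
    intro g
    obtain ⟨k, hk⟩ := Subgroup.mem_zpowers_iff.mp g.2
    have : IsOfFinOrder (g : FreeGroup β) := by rw [← hk]; exact hfin.zpow
    exact Submonoid.isOfFinOrder_coe.mp this
  have hne : Nonempty (IsFreeGroup.Generators H) := by
    by_contra h
    haveI : IsEmpty (IsFreeGroup.Generators H) := not_nonempty_iff.mp h
    haveI : Subsingleton (FreeGroup (IsFreeGroup.Generators H)) := freeGroup_subsingleton
    haveI : Subsingleton H := (IsFreeGroup.toFreeGroup H).toEquiv.subsingleton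
    have : (⟨x, hxH⟩ : H) = (1 : H) := Subsingleton.elim _ _
    exact hx (by simpa using congrArg Subtype.val this)
  obtain ⟨i⟩ := hne
  have h1 : IsOfFinOrder ((IsFreeGroup.toFreeGroup H).symm (FreeGroup.of i)) := htors _
  have h2 : IsOfFinOrder (FreeGroup.of i : FreeGroup (IsFreeGroup.Generators H)) := by
    have := (IsFreeGroup.toFreeGroup H).toMonoidHom.isOfFinOrder h1
    simpa using this
  classical
  obtain ⟨n, hn, hpow⟩ := h2.exists_pow_eq_one
  have := congrArg FreeGroup.norm hpow
  rw [FreeGroup.norm_of_pow, FreeGroup.norm_one] at this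
  exact hn.ne' this

open Monoid Cardinal Pointwise Function in
/-- Ping-pong lemma for free groups, with hypotheses about all nonzero powers of the
generators (only two ping-pong sets are needed in this form). -/
theorem freeGroup_lift_injective_powers {ι : Type*} [Nontrivial ι] {G : Type*} [Group G]
    {α : Type*} [MulAction G α] (a : ι → G) (X : ι → Set α)
    (hXnonempty : ∀ i, (X i).Nonempty)
    (hXdisj : Pairwise (Disjoint on X))
    (hpp : ∀ i j, i ≠ j → ∀ n : ℤ, n ≠ 0 → (a i ^ n) • X j ⊆ X i) :
    Function.Injective (FreeGroup.lift a) := by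
  have heq : FreeGroup.lift a =
      (Monoid.CoprodI.lift fun i => FreeGroup.lift fun _ : Unit => a i).comp
        (@freeGroupEquivCoprodI ι).toMonoidHom := by
    ext i; simp
  rw [heq, MonoidHom.coe_comp]
  refine Function.Injective.comp ?_ (MulEquiv.injective _)
  apply Monoid.CoprodI.lift_injective_of_ping_pong _ ?_ X hXnonempty hXdisj
  · intro i j hij h hne
    have hh : h = FreeGroup.of () ^ (FreeGroup.freeGroupUnitEquivInt h) :=
      (FreeGroup.freeGroupUnitEquivInt.symm_apply_apply h).symm
    have hn : (FreeGroup.freeGroupUnitEquivInt h) ≠ 0 := by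
      intro h0
      rw [h0] at hh
      simp at hh
      exact hne hh
    rw [hh, map_zpow, FreeGroup.lift_apply_of]
    exact hpp i j hij _ hn
  · right
    refine ⟨Classical.arbitrary ι, ?_⟩
    have : #(FreeGroup Unit) = #ℤ := Cardinal.mk_congr FreeGroup.freeGroupUnitEquivInt
    rw [this, Cardinal.mk_int]
    exact le_of_lt (by exact_mod_cast Cardinal.nat_lt_aleph0 3)

/-- Normal form of words in a group generated by `x, y, z` with `x³ = y² = z² = 1`,
`yx = x²y`, `zx = xz`, `zy = yz`. -/
lemma words3 {G : Type*} [Group G] {x y z : G} (hx : x * (x * x) = 1) (hy : y * y = 1)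
    (hz : z * z = 1) (hyx : y * x = x * (x * y)) (hzx : z * x = x * z) (hzy : z * y = y * z)
    {g : G} (hg : g ∈ Subgroup.closure {x, y, z}) :
    ∃ i j k : ℕ, g = x ^ i * (y ^ j * z ^ k) := by
  have hyxp : ∀ i : ℕ, y * x ^ i = x ^ (2 * i) * y := by
    intro i
    induction i with
    | zero => simp
    | succ n ih =>
      rw [pow_succ, ← mul_assoc, ih, mul_assoc, hyx]
      rw [show 2 * (n + 1) = 2 * n + 1 + 1 by ring, pow_succ, pow_succ]
      simp [mul_assoc]
  have hzxp : ∀ i : ℕ, z * x ^ i = x ^ i * z := fun i => (Commute.pow_right hzx i).eq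
  have hzyp : ∀ j : ℕ, z * y ^ j = y ^ j * z := fun j => (Commute.pow_right hzy j).eq
  have stepx : ∀ i j k : ℕ, x * (x ^ i * (y ^ j * z ^ k)) = x ^ (i + 1) * (y ^ j * z ^ k) := by
    intro i j k; rw [pow_succ', mul_assoc]
  have stepy : ∀ i j k : ℕ, y * (x ^ i * (y ^ j * z ^ k)) =
      x ^ (2 * i) * (y ^ (j + 1) * z ^ k) := by
    intro i j k
    rw [← mul_assoc, hyxp, mul_assoc, ← mul_assoc y, ← pow_succ']
  have stepz : ∀ i j k : ℕ, z * (x ^ i * (y ^ j * z ^ k)) = x ^ i * (y ^ j * z ^ (k + 1)) := by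
    intro i j k
    rw [← mul_assoc, hzxp, mul_assoc, ← mul_assoc z, hzyp, mul_assoc, ← pow_succ']
  have hxinv : x⁻¹ = x * x := by
    rw [inv_eq_iff_mul_eq_one, ← mul_assoc] at *; simpa [mul_assoc] using hx
  have hyinv : y⁻¹ = y := by rw [inv_eq_iff_mul_eq_one]; exact hy
  have hzinv : z⁻¹ = z := by rw [inv_eq_iff_mul_eq_one]; exact hz
  induction hg using Subgroup.closure_induction_left with
  | one => exact ⟨0, 0, 0, by simp⟩
  | mul_left t ht g' hg' ih =>
    obtain ⟨i, j, k, rfl⟩ := ih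
    rcases ht with rfl | rfl | rfl
    · exact ⟨i + 1, j, k, stepx i j k⟩
    · exact ⟨2 * i, j + 1, k, stepy i j k⟩
    · exact ⟨i, j, k + 1, stepz i j k⟩
  | inv_mul_cancel t ht g' hg' ih =>
    obtain ⟨i, j, k, rfl⟩ := ih
    rcases ht with rfl | rfl | rfl
    · exact ⟨i + 1 + 1, j, k, by rw [hxinv, mul_assoc, stepx, stepx]⟩
    · exact ⟨2 * i, j + 1, k, by rw [hyinv, stepy]⟩
    · exact ⟨i, j, k + 1, by rw [hzinv, stepz]⟩

namespace Amalgam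

/-! ### The action on the plane modulo `±1` -/

/-- The plane `ℤ²` modulo `v ∼ -v`. -/
def negSetoid : Setoid (ℤ × ℤ) where
  r p q := p = q ∨ p = -q
  iseqv := by
    constructor
    · intro p; exact Or.inl rfl
    · rintro p q (rfl | rfl)
      · exact Or.inl rfl
      · exact Or.inr (neg_neg q).symm
    · rintro p q r (rfl | rfl) (rfl | rfl)
      · exact Or.inl rfl
      · exact Or.inr rfl
      · exact Or.inr rfl
      · exact Or.inl (neg_neg r)

def PM : Type := Quotient negSetoid

def pmk (p : ℤ × ℤ) : PM := Quotient.mk negSetoid p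

lemma pmk_surjective : Function.Surjective pmk := Quotient.mk_surjective

/-- Descend a negation-equivariant permutation of the plane to `PM`. -/
def descend (e : Equiv.Perm (ℤ × ℤ)) (h : ∀ p : ℤ × ℤ, e (-p) = -(e p)) : Equiv.Perm PM where
  toFun := Quotient.map e (by
    rintro p q (rfl | rfl)
    · exact Or.inl rfl
    · exact Or.inr (by rw [h]))
  invFun := Quotient.map e.symm (by
    have h' : ∀ p : ℤ × ℤ, e.symm (-p) = -(e.symm p) := by
      intro p
      apply e.injective
      rw [h, Equiv.apply_symm_apply, Equiv.apply_symm_apply]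
    rintro p q (rfl | rfl)
    · exact Or.inl rfl
    · exact Or.inr (by rw [h']))
  left_inv := by rintro ⟨p⟩; exact congrArg (Quotient.mk _) (e.symm_apply_apply p)
  right_inv := by rintro ⟨p⟩; exact congrArg (Quotient.mk _) (e.apply_symm_apply p)

@[simp] lemma descend_apply (e : Equiv.Perm (ℤ × ℤ)) (h) (p : ℤ × ℤ) :
    descend e h (pmk p) = pmk (e p) := rfl

def eA : Equiv.Perm (ℤ × ℤ) where
  toFun p := (-p.2, p.1 - p.2)
  invFun p := (p.2 - p.1, -p.1)
  left_inv := by rintro ⟨x, y⟩; simp [Prod.ext_iff] <;> ring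
  right_inv := by rintro ⟨x, y⟩; simp [Prod.ext_iff] <;> ring

def eB : Equiv.Perm (ℤ × ℤ) where
  toFun p := (p.2, p.1)
  invFun p := (p.2, p.1)
  left_inv := by rintro ⟨x, y⟩; rfl
  right_inv := by rintro ⟨x, y⟩; rfl

def eC : Equiv.Perm (ℤ × ℤ) where
  toFun p := (p.1, -p.2)
  invFun p := (p.1, -p.2)
  left_inv := by rintro ⟨x, y⟩; simp
  right_inv := by rintro ⟨x, y⟩; simp

def eU : Equiv.Perm (ℤ × ℤ) where
  toFun p := (p.1, p.2 - 2 * p.1)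
  invFun p := (p.1, p.2 + 2 * p.1)
  left_inv := by rintro ⟨x, y⟩; simp
  right_inv := by rintro ⟨x, y⟩; simp

def eW : Equiv.Perm (ℤ × ℤ) where
  toFun p := (p.1 - 2 * p.2, p.2)
  invFun p := (p.1 + 2 * p.2, p.2)
  left_inv := by rintro ⟨x, y⟩; simp
  right_inv := by rintro ⟨x, y⟩; simp

def pA : Equiv.Perm PM := descend eA (by rintro ⟨x, y⟩; simp [eA, Prod.ext_iff] <;> ring)
def pB : Equiv.Perm PM := descend eB (by rintro ⟨x, y⟩; rfl)
def pC : Equiv.Perm PM := descend eC (by rintro ⟨x, y⟩; simp [eC, Prod.ext_iff])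
def pU : Equiv.Perm PM := descend eU (by rintro ⟨x, y⟩; simp [eU, Prod.ext_iff] <;> ring)
def pW : Equiv.Perm PM := descend eW (by rintro ⟨x, y⟩; simp [eW, Prod.ext_iff] <;> ring)

@[simp] lemma pA_apply (p : ℤ × ℤ) : pA (pmk p) = pmk (-p.2, p.1 - p.2) := rfl
@[simp] lemma pB_apply (p : ℤ × ℤ) : pB (pmk p) = pmk (p.2, p.1) := rfl
@[simp] lemma pC_apply (p : ℤ × ℤ) : pC (pmk p) = pmk (p.1, -p.2) := rfl
@[simp] lemma pU_apply (p : ℤ × ℤ) : pU (pmk p) = pmk (p.1, p.2 - 2 * p.1) := rfl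
@[simp] lemma pW_apply (p : ℤ × ℤ) : pW (pmk p) = pmk (p.1 - 2 * p.2, p.2) := rfl
@[simp] lemma pA_inv_apply (p : ℤ × ℤ) : pA⁻¹ (pmk p) = pmk (p.2 - p.1, -p.1) := rfl
@[simp] lemma pB_inv_apply (p : ℤ × ℤ) : pB⁻¹ (pmk p) = pmk (p.2, p.1) := rfl
@[simp] lemma pC_inv_apply (p : ℤ × ℤ) : pC⁻¹ (pmk p) = pmk (p.1, -p.2) := rfl
@[simp] lemma pU_inv_apply (p : ℤ × ℤ) : pU⁻¹ (pmk p) = pmk (p.1, p.2 + 2 * p.1) := rfl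
@[simp] lemma pW_inv_apply (p : ℤ × ℤ) : pW⁻¹ (pmk p) = pmk (p.1 + 2 * p.2, p.2) := rfl
@[simp] lemma pmk_neg_pair (x y : ℤ) : pmk (-x, -y) = pmk (x, y) :=
  Quotient.sound (Or.inr (by simp [Prod.ext_iff]))

def permMap : Fin 3 → Equiv.Perm PM := ![pA, pB, pC]

lemma permMap_rels : ∀ r ∈ amalgamRels, FreeGroup.lift permMap r = 1 := by
  intro r hr
  have h0 : permMap 0 = pA := rfl
  have h1 : permMap 1 = pB := rfl
  have h2 : permMap 2 = pC := rfl
  rcases hr with rfl | rfl | rfl | rfl | rfl <;>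
    · simp only [map_mul, map_pow, map_inv, FreeGroup.lift_apply_of, h0, h1, h2]
      ext q
      obtain ⟨⟨x, y⟩, rfl⟩ := pmk_surjective q
      have hAi : ∀ p, pA.symm (pmk p) = pmk (p.2 - p.1, -p.1) := fun p => rfl
      have hBi : ∀ p, pB.symm (pmk p) = pmk (p.2, p.1) := fun p => rfl
      have hCi : ∀ p, pC.symm (pmk p) = pmk (p.1, -p.2) := fun p => rfl
      simp [pow_succ, hAi, hBi, hCi]
      try ring_nf

/-! ### The presented group and its basic relations -/

abbrev Γ := PresentedGroup amalgamRels

def A : Γ := PresentedGroup.of 0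
def B : Γ := PresentedGroup.of 1
def C : Γ := PresentedGroup.of 2

lemma mk_rel_one {r : FreeGroup (Fin 3)} (h : r ∈ amalgamRels) :
    PresentedGroup.mk amalgamRels r = 1 := by
  change QuotientGroup.mk r = 1
  exact PresentedGroup.one_of_mem h

lemma hA3 : A * A * A = 1 := by
  have h := mk_rel_one (show (FreeGroup.of 0) ^ 3 ∈ amalgamRels from Set.mem_insert _ _)
  rw [map_pow] at h
  simpa [pow_succ, mul_assoc, A, PresentedGroup.of] using h

lemma hB2 : B * B = 1 := by
  have h := mk_rel_one (show (FreeGroup.of 1) ^ 2 ∈ amalgamRels from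
    Set.mem_insert_of_mem _ (Set.mem_insert _ _))
  rw [map_pow] at h
  simpa [pow_succ, B, C, PresentedGroup.of] using h

lemma hC2 : C * C = 1 := by
  have h := mk_rel_one (show (FreeGroup.of 2) ^ 2 ∈ amalgamRels from
    Set.mem_insert_of_mem _ (Set.mem_insert_of_mem _ (Set.mem_insert _ _)))
  rw [map_pow] at h
  simpa [pow_succ, B, C, PresentedGroup.of] using h

lemma hBAB : B * A * B = A * A := by
  have h := mk_rel_one (show FreeGroup.of 1 * FreeGroup.of 0 * FreeGroup.of 1 *
      ((FreeGroup.of 0) ^ 2)⁻¹ ∈ amalgamRels from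
    Set.mem_insert_of_mem _ (Set.mem_insert_of_mem _ (Set.mem_insert_of_mem _
      (Set.mem_insert _ _))))
  simp only [map_mul, map_inv, map_pow] at h
  rw [mul_inv_eq_one] at h
  simpa [pow_succ, A, B, PresentedGroup.of] using h

lemma hBC : B * C = C * B := by
  have h := mk_rel_one (show FreeGroup.of 1 * FreeGroup.of 2 * (FreeGroup.of 1)⁻¹ *
      (FreeGroup.of 2)⁻¹ ∈ amalgamRels from
    Set.mem_insert_of_mem _ (Set.mem_insert_of_mem _ (Set.mem_insert_of_mem _
      (Set.mem_insert_of_mem _ rfl))))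
  simp only [map_mul, map_inv] at h
  rw [mul_inv_eq_one, mul_inv_eq_iff_eq_mul] at h
  exact h

lemma hBinv : B⁻¹ = B := by rw [inv_eq_iff_mul_eq_one]; exact hB2
lemma hCinv : C⁻¹ = C := by rw [inv_eq_iff_mul_eq_one]; exact hC2
lemma hAinv : A⁻¹ = A * A := by rw [inv_eq_iff_mul_eq_one, ← mul_assoc]; exact hA3

lemma rA (x : Γ) : A * (A * (A * x)) = x := by rw [← mul_assoc, ← mul_assoc, hA3, one_mul]
lemma rB (x : Γ) : B * (B * x) = x := by rw [← mul_assoc, hB2, one_mul]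
lemma rC (x : Γ) : C * (C * x) = x := by rw [← mul_assoc, hC2, one_mul]
lemma rBA (x : Γ) : B * (A * x) = A * (A * (B * x)) := by
  have h : B * A = A * A * B := by
    rw [← hBAB, mul_assoc, mul_assoc, hB2, mul_one]
  rw [← mul_assoc, h]; simp [mul_assoc]
lemma rBC (x : Γ) : B * (C * x) = C * (B * x) := by rw [← mul_assoc, hBC, mul_assoc]
lemma riA (x : Γ) : A⁻¹ * x = A * (A * x) := by rw [hAinv, mul_assoc]
lemma riB (x : Γ) : B⁻¹ * x = B * x := by rw [hBinv]
lemma riC (x : Γ) : C⁻¹ * x = C * x := by rw [hCinv]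

def u : Γ := C * A * C * A⁻¹
def w : Γ := B * u * B

lemma mul_right_cancel_one {x y : Γ} (h : ∀ t : Γ, x * t = y * t) : x = y := by
  have := h 1; simpa using this

lemma E1 : A * u * A⁻¹ = u⁻¹ * w := by
  apply mul_right_cancel_one; intro t
  simp only [u, w, mul_inv_rev, inv_inv, mul_assoc, riA, riB, riC, rA, rB, rC, rBA, rBC]

lemma E2 : A * w * A⁻¹ = u⁻¹ := by
  apply mul_right_cancel_one; intro t
  simp only [u, w, mul_inv_rev, inv_inv, mul_assoc, riA, riB, riC, rA, rB, rC, rBA, rBC]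

lemma E3 : B * u * B⁻¹ = w := by
  apply mul_right_cancel_one; intro t
  simp only [u, w, mul_inv_rev, inv_inv, mul_assoc, riA, riB, riC, rA, rB, rC, rBA, rBC]

lemma E4 : B * w * B⁻¹ = u := by
  apply mul_right_cancel_one; intro t
  simp only [u, w, mul_inv_rev, inv_inv, mul_assoc, riA, riB, riC, rA, rB, rC, rBA, rBC]

lemma E5 : C * u * C⁻¹ = u⁻¹ := by
  apply mul_right_cancel_one; intro t
  simp only [u, w, mul_inv_rev, inv_inv, mul_assoc, riA, riB, riC, rA, rB, rC, rBA, rBC]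

lemma E6 : C * w * C⁻¹ = w⁻¹ := by
  apply mul_right_cancel_one; intro t
  simp only [u, w, mul_inv_rev, inv_inv, mul_assoc, riA, riB, riC, rA, rB, rC, rBA, rBC]

lemma E1' : A⁻¹ * u * A⁻¹⁻¹ = w⁻¹ := by
  rw [inv_inv]
  have h2 : u = A * w⁻¹ * A⁻¹ := by
    rw [← inv_inv u, ← E2]; group
  rw [h2]; group

lemma E2' : A⁻¹ * w * A⁻¹⁻¹ = w⁻¹ * u := by
  rw [inv_inv]
  have hu : A⁻¹ * u * A = w⁻¹ := by
    have h2 : u = A * w⁻¹ * A⁻¹ := by rw [← inv_inv u, ← E2]; group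
    rw [h2]; group
  have hw : w = u * (A * u * A⁻¹) := by rw [E1]; group
  calc A⁻¹ * w * A = (A⁻¹ * u * A) * u := by rw [hw]; group
  _ = w⁻¹ * u := by rw [hu]

/-! ### The subgroup `N = ⟨u, w⟩` and its normality -/

def N : Subgroup Γ := Subgroup.closure {u, w}

lemma u_mem_N : u ∈ N := Subgroup.subset_closure (Or.inl rfl)
lemma w_mem_N : w ∈ N := Subgroup.subset_closure (Or.inr rfl)

lemma conj_mem_N {g : Γ} (hu' : g * u * g⁻¹ ∈ N) (hw' : g * w * g⁻¹ ∈ N) :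
    ∀ n ∈ N, g * n * g⁻¹ ∈ N := by
  intro n hn
  induction hn using Subgroup.closure_induction with
  | mem t ht => rcases ht with rfl | rfl; exacts [hu', hw']
  | one => simpa using one_mem N
  | mul p q hp hq ihp ihq =>
    have h : g * (p * q) * g⁻¹ = (g * p * g⁻¹) * (g * q * g⁻¹) := by group
    rw [h]; exact mul_mem ihp ihq
  | inv p hp ihp =>
    have h : g * p⁻¹ * g⁻¹ = (g * p * g⁻¹)⁻¹ := by group
    rw [h]; exact inv_mem ihp

lemma genTop : Subgroup.closure ({A, B, C} : Set Γ) = ⊤ := by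
  have hset : (Set.range (PresentedGroup.of : Fin 3 → Γ)) = {A, B, C} := by
    ext t
    constructor
    · rintro ⟨i, rfl⟩
      fin_cases i
      · exact Or.inl rfl
      · exact Or.inr (Or.inl rfl)
      · exact Or.inr (Or.inr rfl)
    · rintro (rfl | rfl | rfl)
      exacts [⟨0, rfl⟩, ⟨1, rfl⟩, ⟨2, rfl⟩]
  rw [← hset]
  exact PresentedGroup.closure_range_of _

lemma N_normal : N.Normal := by
  constructor
  intro n hn g
  have hg : g ∈ Subgroup.closure ({A, B, C} : Set Γ) := by rw [genTop]; trivial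
  induction hg using Subgroup.closure_induction_left with
  | one => simpa using hn
  | mul_left x hx y hy ih =>
    have h : (x * y) * n * (x * y)⁻¹ = x * (y * n * y⁻¹) * x⁻¹ := by group
    rw [h]
    rcases hx with rfl | rfl | rfl
    · exact conj_mem_N (by rw [E1]; exact mul_mem (inv_mem u_mem_N) w_mem_N)
        (by rw [E2]; exact inv_mem u_mem_N) _ ih
    · exact conj_mem_N (by rw [E3]; exact w_mem_N) (by rw [E4]; exact u_mem_N) _ ih
    · exact conj_mem_N (by rw [E5]; exact inv_mem u_mem_N)
        (by rw [E6]; exact inv_mem w_mem_N) _ ih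
  | inv_mul_cancel x hx y hy ih =>
    have h : (x⁻¹ * y) * n * (x⁻¹ * y)⁻¹ = x⁻¹ * (y * n * y⁻¹) * x⁻¹⁻¹ := by group
    rw [h]
    rcases hx with rfl | rfl | rfl
    · exact conj_mem_N (by rw [E1']; exact inv_mem w_mem_N)
        (by rw [E2']; exact mul_mem (inv_mem w_mem_N) u_mem_N) _ ih
    · exact conj_mem_N (by rw [hBinv, E3]; exact w_mem_N)
        (by rw [hBinv, E4]; exact u_mem_N) _ ih
    · exact conj_mem_N (by rw [hCinv, E5]; exact inv_mem u_mem_N)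
        (by rw [hCinv, E6]; exact inv_mem w_mem_N) _ ih

end Amalgam
namespace Amalgam

/-! ### The target group and the homomorphism φ -/

abbrev Q' : Type := Equiv.Perm (Fin 3) × Multiplicative (ZMod 2)

def σ : Equiv.Perm (Fin 3) := finRotate 3
def τ : Equiv.Perm (Fin 3) := Equiv.swap 0 1
def g2 : Multiplicative (ZMod 2) := Multiplicative.ofAdd 1

def qf : Fin 3 → Q' := ![(σ, 1), (τ, 1), (1, g2)]

lemma qf_rels : ∀ r ∈ amalgamRels, FreeGroup.lift qf r = 1 := by
  intro r hr
  have h0 : qf 0 = (σ, 1) := rfl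
  have h1 : qf 1 = (τ, 1) := rfl
  have h2 : qf 2 = (1, g2) := rfl
  rcases hr with rfl | rfl | rfl | rfl | rfl <;>
    · simp only [map_mul, map_pow, map_inv, FreeGroup.lift_apply_of, h0, h1, h2]
      decide

def φ0 : Γ →* Q' := PresentedGroup.toGroup qf_rels

lemma φ0_A : φ0 A = (σ, 1) := PresentedGroup.toGroup.of qf_rels
lemma φ0_B : φ0 B = (τ, 1) := PresentedGroup.toGroup.of qf_rels
lemma φ0_C : φ0 C = (1, g2) := PresentedGroup.toGroup.of qf_rels

lemma φ0_surj : Function.Surjective φ0 := by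
  have hall : ∀ q : Q', ∃ (i : Fin 3) (j k : Fin 2),
      ((σ, 1) : Q') ^ (i : ℕ) * (((τ, 1) : Q') ^ (j : ℕ) * ((1, g2) : Q') ^ (k : ℕ)) = q := by
    decide
  intro q
  obtain ⟨i, j, k, hq⟩ := hall q
  exact ⟨A ^ (i : ℕ) * (B ^ (j : ℕ) * C ^ (k : ℕ)), by
    simp only [map_mul, map_pow, φ0_A, φ0_B, φ0_C, hq]⟩

lemma N_le_ker : N ≤ φ0.ker := by
  rw [N, Subgroup.closure_le]
  rintro t (rfl | rfl) <;>
    · simp only [SetLike.mem_coe, MonoidHom.mem_ker, w, u, map_mul, map_inv,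
        φ0_A, φ0_B, φ0_C]
      decide

/-! ### The quotient `Γ ⧸ N` has at most 12 elements, hence `ker φ = N` -/

instance : Amalgam.N.Normal := N_normal

lemma qu_one : ((u : Γ) : Γ ⧸ N) = 1 := (QuotientGroup.eq_one_iff u).mpr u_mem_N

lemma qCC : ((C : Γ) : Γ ⧸ N) * C = 1 := by
  rw [← QuotientGroup.mk_mul, hC2]; rfl

lemma qCA : ((C : Γ) : Γ ⧸ N) * A = (A : Γ ⧸ N) * C := by
  have h : ((u : Γ) : Γ ⧸ N) = 1 := qu_one
  rw [u] at h
  simp only [QuotientGroup.mk_mul, QuotientGroup.mk_inv] at h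
  have h2 : ((C : Γ) : Γ ⧸ N) * A * C = A := mul_inv_eq_one.mp h
  calc ((C : Γ) : Γ ⧸ N) * A = ((C : Γ) : Γ ⧸ N) * A * (C * C) := by
        rw [qCC, mul_one]
  _ = (((C : Γ) : Γ ⧸ N) * A * C) * C := by rw [mul_assoc, mul_assoc, mul_assoc]
  _ = (A : Γ ⧸ N) * C := by rw [h2]

lemma quot_words : ∀ gq : Γ ⧸ N, ∃ i j k : ℕ,
    gq = ((A : Γ) : Γ ⧸ N) ^ i * (((B : Γ) : Γ ⧸ N) ^ j * ((C : Γ) : Γ ⧸ N) ^ k) := by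
  intro gq
  obtain ⟨g, rfl⟩ := QuotientGroup.mk'_surjective N gq
  have hg : g ∈ Subgroup.closure ({A, B, C} : Set Γ) := by rw [genTop]; trivial
  have himg : (QuotientGroup.mk' N) g ∈ (Subgroup.closure ({A, B, C} : Set Γ)).map
      (QuotientGroup.mk' N) := ⟨g, hg, rfl⟩
  rw [MonoidHom.map_closure] at himg
  have hsimg : (QuotientGroup.mk' N) '' {A, B, C} =
      {((A : Γ) : Γ ⧸ N), ((B : Γ) : Γ ⧸ N), ((C : Γ) : Γ ⧸ N)} := by
    simp [Set.image_insert_eq]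
  rw [hsimg] at himg
  have hBA : B * A = A * (A * B) := by simpa using rBA 1
  refine words3 ?_ ?_ ?_ ?_ ?_ ?_ himg
  · simp only [← QuotientGroup.mk_mul]
    rw [show A * (A * A) = (1 : Γ) from by rw [← mul_assoc]; exact hA3]
    rfl
  · rw [← QuotientGroup.mk_mul, hB2]; rfl
  · rw [← QuotientGroup.mk_mul, hC2]; rfl
  · simp only [← QuotientGroup.mk_mul]
    exact congrArg _ hBA
  · exact qCA
  · simp only [← QuotientGroup.mk_mul]
    exact congrArg _ hBC.symm

lemma qA3 : ((A : Γ) : Γ ⧸ N) ^ 3 = 1 := by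
  rw [pow_succ, pow_two]
  simp only [← QuotientGroup.mk_mul]
  rw [hA3]; rfl
lemma qB2 : ((B : Γ) : Γ ⧸ N) ^ 2 = 1 := by
  rw [pow_two, ← QuotientGroup.mk_mul, hB2]; rfl
lemma qC2 : ((C : Γ) : Γ ⧸ N) ^ 2 = 1 := by
  rw [pow_two, ← QuotientGroup.mk_mul, hC2]; rfl

def f12 : Fin 3 × Fin 2 × Fin 2 → Γ ⧸ N := fun t =>
  ((A : Γ) : Γ ⧸ N) ^ (t.1 : ℕ) * (((B : Γ) : Γ ⧸ N) ^ (t.2.1 : ℕ) *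
    ((C : Γ) : Γ ⧸ N) ^ (t.2.2 : ℕ))

lemma f12_surj : Function.Surjective f12 := by
  intro gq
  obtain ⟨i, j, k, rfl⟩ := quot_words gq
  refine ⟨(⟨i % 3, Nat.mod_lt _ (by norm_num)⟩, ⟨j % 2, Nat.mod_lt _ (by norm_num)⟩,
    ⟨k % 2, Nat.mod_lt _ (by norm_num)⟩), ?_⟩
  simp only [f12]
  rw [← pow_eq_pow_mod i qA3, ← pow_eq_pow_mod j qB2, ← pow_eq_pow_mod k qC2]

instance : Finite (Γ ⧸ N) := Finite.of_surjective f12 f12_surj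

lemma card_quot_le : Nat.card (Γ ⧸ N) ≤ 12 := by
  have := Nat.card_le_card_of_surjective f12 f12_surj
  simpa using this

lemma card_Q' : Nat.card Q' = 12 := by
  rw [Nat.card_eq_fintype_card]
  decide

def φbar : Γ ⧸ N →* Q' := QuotientGroup.lift N φ0 (fun _ hx => N_le_ker hx)

lemma φbar_surj : Function.Surjective φbar := by
  intro q
  obtain ⟨g, hg⟩ := φ0_surj q
  exact ⟨((g : Γ) : Γ ⧸ N), hg⟩

lemma φbar_bij : Function.Bijective φbar := by
  refine (Nat.bijective_iff_surjective_and_card φbar).mpr ⟨φbar_surj, ?_⟩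
  have h1 := Nat.card_le_card_of_surjective φbar φbar_surj
  have := card_quot_le
  rw [card_Q'] at *
  omega

lemma ker_eq_N : φ0.ker = N := by
  apply le_antisymm
  · intro k hk
    have h1 : φbar ((k : Γ) : Γ ⧸ N) = 1 := hk
    have h2 : ((k : Γ) : Γ ⧸ N) = 1 := by
      apply φbar_bij.injective
      rw [h1, map_one]
    exact (QuotientGroup.eq_one_iff k).mp h2
  · exact N_le_ker

end Amalgam
namespace Amalgam

/-! ### The representation on `PM` and freeness of `N` -/

def ρ : Γ →* Equiv.Perm PM := PresentedGroup.toGroup permMap_rels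

lemma ρ_A : ρ A = pA := PresentedGroup.toGroup.of permMap_rels
lemma ρ_B : ρ B = pB := PresentedGroup.toGroup.of permMap_rels
lemma ρ_C : ρ C = pC := PresentedGroup.toGroup.of permMap_rels

lemma ρ_u : ρ u = pU := by
  rw [u, map_mul, map_mul, map_mul, map_inv, ρ_A, ρ_C]
  ext q
  obtain ⟨⟨x, y⟩, rfl⟩ := pmk_surjective q
  simp only [Equiv.Perm.mul_apply, pA_inv_apply, pC_apply, pA_apply, pU_apply]
  refine Eq.trans ?_ (pmk_neg_pair x (y - 2 * x))
  congr 1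
  rw [Prod.mk.injEq]
  constructor <;> ring

lemma ρ_w : ρ w = pW := by
  rw [w, map_mul, map_mul, ρ_B, ρ_u]
  ext q
  obtain ⟨⟨x, y⟩, rfl⟩ := pmk_surjective q
  simp only [Equiv.Perm.mul_apply, pB_apply, pU_apply, pW_apply]

lemma pU_zpow (n : ℤ) : ∀ x y : ℤ, (pU ^ n) (pmk (x, y)) = pmk (x, y - 2 * n * x) := by
  induction n using Int.induction_on with
  | zero => intro x y; norm_num
  | succ m ih =>
    intro x y
    rw [zpow_add_one, Equiv.Perm.mul_apply, pU_apply]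
    have := ih x (y - 2 * x)
    rw [show ((x, y) : ℤ × ℤ).1 = x from rfl, show ((x, y) : ℤ × ℤ).2 = y from rfl, this]
    congr 1
    rw [Prod.mk.injEq]
    exact ⟨rfl, by push_cast; ring⟩
  | pred m ih =>
    intro x y
    rw [zpow_sub_one, Equiv.Perm.mul_apply, pU_inv_apply]
    have := ih x (y + 2 * x)
    rw [show ((x, y) : ℤ × ℤ).1 = x from rfl, show ((x, y) : ℤ × ℤ).2 = y from rfl, this]
    congr 1
    rw [Prod.mk.injEq]
    exact ⟨rfl, by push_cast; ring⟩

lemma pW_zpow (n : ℤ) : ∀ x y : ℤ, (pW ^ n) (pmk (x, y)) = pmk (x - 2 * n * y, y) := by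
  induction n using Int.induction_on with
  | zero => intro x y; norm_num
  | succ m ih =>
    intro x y
    rw [zpow_add_one, Equiv.Perm.mul_apply, pW_apply]
    have := ih (x - 2 * y) y
    rw [show ((x, y) : ℤ × ℤ).1 = x from rfl, show ((x, y) : ℤ × ℤ).2 = y from rfl, this]
    congr 1
    rw [Prod.mk.injEq]
    exact ⟨by push_cast; ring, rfl⟩
  | pred m ih =>
    intro x y
    rw [zpow_sub_one, Equiv.Perm.mul_apply, pW_inv_apply]
    have := ih (x + 2 * y) y
    rw [show ((x, y) : ℤ × ℤ).1 = x from rfl, show ((x, y) : ℤ × ℤ).2 = y from rfl, this]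
    congr 1
    rw [Prod.mk.injEq]
    exact ⟨by push_cast; ring, rfl⟩

def abs1 : PM → ℤ := Quotient.lift (fun p : ℤ × ℤ => |p.1|) (by
  rintro p q (rfl | rfl)
  · rfl
  · show |(-q).1| = |q.1|
    simp)

def abs2 : PM → ℤ := Quotient.lift (fun p : ℤ × ℤ => |p.2|) (by
  rintro p q (rfl | rfl)
  · rfl
  · show |(-q).2| = |q.2|
    simp)

@[simp] lemma abs1_pmk (p : ℤ × ℤ) : abs1 (pmk p) = |p.1| := rfl
@[simp] lemma abs2_pmk (p : ℤ × ℤ) : abs2 (pmk p) = |p.2| := rfl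

def XS : Fin 2 → Set PM := ![{q | abs1 q < abs2 q}, {q | abs2 q < abs1 q}]

lemma XS_nonempty : ∀ i, (XS i).Nonempty := by
  intro i
  fin_cases i
  · exact ⟨pmk (0, 1), by simp [XS]⟩
  · exact ⟨pmk (1, 0), by simp [XS]⟩

open Function in
lemma XS_disjoint : Pairwise (Disjoint on XS) := by
  have hd : Disjoint (XS 0) (XS 1) := by
    refine Set.disjoint_left.mpr ?_
    intro q h0 h1
    have h0' : abs1 q < abs2 q := h0
    have h1' : abs2 q < abs1 q := h1
    exact absurd h1' (lt_asymm h0')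
  intro i j hij
  fin_cases i <;> fin_cases j
  · simp at hij
  · exact hd
  · exact hd.symm
  · simp at hij

lemma pingpong_arith {x y n : ℤ} (hn : n ≠ 0) (hlt : |y| < |x|) :
    |x| < |y - 2 * n * x| := by
  have h1 : (1 : ℤ) ≤ |n| := Int.one_le_abs hn
  have h2 : |2 * n * x| - |y| ≤ |2 * n * x - y| := abs_sub_abs_le_abs_sub _ _
  have h3 : |y - 2 * n * x| = |2 * n * x - y| := abs_sub_comm _ _
  have h4 : |2 * n * x| = 2 * (|n| * |x|) := by
    rw [mul_assoc, abs_mul, abs_two]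
    rw [abs_mul]
  have h5 : 0 ≤ |x| := abs_nonneg x
  nlinarith [mul_le_mul_of_nonneg_right h1 h5]

open Pointwise in
lemma ppU {n : ℤ} (hn : n ≠ 0) : (pU ^ n) • XS 1 ⊆ XS 0 := by
  intro t ht
  rw [Set.mem_smul_set] at ht
  obtain ⟨q, hq, rfl⟩ := ht
  obtain ⟨⟨x, y⟩, rfl⟩ := pmk_surjective q
  have hq' : |y| < |x| := hq
  have happ : (pU ^ n) • pmk (x, y) = pmk (x, y - 2 * n * x) := pU_zpow n x y
  rw [happ]
  exact (show |x| < |y - 2 * n * x| from pingpong_arith hn hq')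

open Pointwise in
lemma ppW {n : ℤ} (hn : n ≠ 0) : (pW ^ n) • XS 0 ⊆ XS 1 := by
  intro t ht
  rw [Set.mem_smul_set] at ht
  obtain ⟨q, hq, rfl⟩ := ht
  obtain ⟨⟨x, y⟩, rfl⟩ := pmk_surjective q
  have hq' : |x| < |y| := hq
  have happ : (pW ^ n) • pmk (x, y) = pmk (x - 2 * n * y, y) := pW_zpow n x y
  rw [happ]
  exact (show |y| < |x - 2 * n * y| from pingpong_arith hn hq')

open Pointwise in
lemma pp_lift_inj : Function.Injective (FreeGroup.lift ![pU, pW]) := by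
  apply freeGroup_lift_injective_powers _ XS XS_nonempty XS_disjoint
  intro i j hij n hn
  fin_cases i <;> fin_cases j
  · simp at hij
  · exact ppU hn
  · exact ppW hn
  · simp at hij

def j0 : FreeGroup (Fin 2) →* Γ := FreeGroup.lift ![u, w]

lemma ρ_j0 : ρ.comp j0 = FreeGroup.lift ![pU, pW] := by
  apply FreeGroup.ext_hom
  intro i
  rw [MonoidHom.comp_apply,
    show j0 (FreeGroup.of i) = ![u, w] i from FreeGroup.lift_apply_of,
    show (FreeGroup.lift ![pU, pW]) (FreeGroup.of i) = ![pU, pW] i from FreeGroup.lift_apply_of]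
  fin_cases i
  · exact ρ_u
  · exact ρ_w

lemma j0_inj : Function.Injective j0 := by
  intro x y hxy
  apply pp_lift_inj
  rw [← ρ_j0]
  simp only [MonoidHom.comp_apply, hxy]

lemma j0_range : j0.range = N := by
  rw [j0, FreeGroup.range_lift_eq_closure]
  congr 1
  ext t
  constructor
  · rintro ⟨i, rfl⟩
    fin_cases i
    · exact Or.inl rfl
    · exact Or.inr rfl
  · rintro (rfl | rfl)
    exacts [⟨0, rfl⟩, ⟨1, rfl⟩]

noncomputable def theIso : ↥φ0.ker ≃* FreeGroup (Fin 2) :=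
  (MulEquiv.subgroupCongr (ker_eq_N.trans j0_range.symm)).trans
    (MonoidHom.ofInjective j0_inj).symm

lemma ker_torsionFree : Monoid.IsTorsionFree ↥φ0.ker := by
  intro g hg hford
  have h1 : theIso g ≠ 1 := fun h => hg (theIso.injective (by simpa using h))
  exact freeGroup_isTorsionFree (Fin 2) _ h1 (theIso.toMonoidHom.isOfFinOrder hford)

lemma ker_index : φ0.ker.index = 12 := by
  rw [Subgroup.index_ker, MonoidHom.range_eq_top.mpr φ0_surj, ← card_Q']
  exact Nat.card_congr Subgroup.topEquiv.toEquiv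

/-! ### Injectivity on the two visible subgroups -/

lemma hBA : B * A = A * (A * B) := by simpa using rBA 1

lemma words_ab {g : Γ} (hg : g ∈ Subgroup.closure ({A, B} : Set Γ)) :
    ∃ i j : ℕ, g = A ^ i * B ^ j := by
  have hsub : ({A, B} : Set Γ) ⊆ {A, B, (1 : Γ)} := by
    rintro t (rfl | rfl)
    · exact Or.inl rfl
    · exact Or.inr (Or.inl rfl)
  have hg' := Subgroup.closure_mono hsub hg
  obtain ⟨i, j, k, rfl⟩ := words3 (by rw [← mul_assoc]; exact hA3) hB2 (by simp) hBA
    (by simp) (by simp) hg'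
  exact ⟨i, j, by simp⟩

lemma words_bc {g : Γ} (hg : g ∈ Subgroup.closure ({B, C} : Set Γ)) :
    ∃ j k : ℕ, g = B ^ j * C ^ k := by
  have hsub : ({B, C} : Set Γ) ⊆ {(1 : Γ), B, C} := by
    rintro t (rfl | rfl)
    · exact Or.inr (Or.inl rfl)
    · exact Or.inr (Or.inr rfl)
  have hg' := Subgroup.closure_mono hsub hg
  obtain ⟨i, j, k, rfl⟩ := words3 (by simp) hB2 hC2 (by simp) (by simp) hBC.symm hg'
  exact ⟨j, k, by simp⟩

lemma hA3p : A ^ 3 = 1 := by rw [pow_succ, pow_two]; exact hA3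
lemma hB2p : B ^ 2 = 1 := by rw [pow_two]; exact hB2
lemma hC2p : C ^ 2 = 1 := by rw [pow_two]; exact hC2

lemma injOn_ab : Set.InjOn φ0 (Subgroup.closure ({A, B} : Set Γ) : Subgroup Γ) := by
  intro x hx y hy hxy
  obtain ⟨i, j, rfl⟩ := words_ab hx
  obtain ⟨p, q, rfl⟩ := words_ab hy
  rw [pow_eq_pow_mod i hA3p, pow_eq_pow_mod j hB2p] at hxy ⊢
  rw [pow_eq_pow_mod p hA3p, pow_eq_pow_mod q hB2p] at hxy ⊢
  have key : ∀ (i' p' : Fin 3) (j' q' : Fin 2),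
      ((σ, 1) : Q') ^ (i' : ℕ) * ((τ, 1) : Q') ^ (j' : ℕ) =
      ((σ, 1) : Q') ^ (p' : ℕ) * ((τ, 1) : Q') ^ (q' : ℕ) → i' = p' ∧ j' = q' := by decide
  have hQ : ((σ, 1) : Q') ^ (i % 3) * ((τ, 1) : Q') ^ (j % 2) =
      ((σ, 1) : Q') ^ (p % 3) * ((τ, 1) : Q') ^ (q % 2) := by
    simpa [map_mul, map_pow, φ0_A, φ0_B] using hxy
  have h2 := key ⟨i % 3, Nat.mod_lt _ (by norm_num)⟩ ⟨p % 3, Nat.mod_lt _ (by norm_num)⟩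
    ⟨j % 2, Nat.mod_lt _ (by norm_num)⟩ ⟨q % 2, Nat.mod_lt _ (by norm_num)⟩ hQ
  rw [show i % 3 = p % 3 from congrArg Fin.val h2.1,
    show j % 2 = q % 2 from congrArg Fin.val h2.2]

lemma injOn_bc : Set.InjOn φ0 (Subgroup.closure ({B, C} : Set Γ) : Subgroup Γ) := by
  intro x hx y hy hxy
  obtain ⟨j, k, rfl⟩ := words_bc hx
  obtain ⟨q, r, rfl⟩ := words_bc hy
  rw [pow_eq_pow_mod j hB2p, pow_eq_pow_mod k hC2p] at hxy ⊢
  rw [pow_eq_pow_mod q hB2p, pow_eq_pow_mod r hC2p] at hxy ⊢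
  have key : ∀ (j' q' k' r' : Fin 2),
      ((τ, 1) : Q') ^ (j' : ℕ) * ((1, g2) : Q') ^ (k' : ℕ) =
      ((τ, 1) : Q') ^ (q' : ℕ) * ((1, g2) : Q') ^ (r' : ℕ) → j' = q' ∧ k' = r' := by decide
  have hQ : ((τ, 1) : Q') ^ (j % 2) * ((1, g2) : Q') ^ (k % 2) =
      ((τ, 1) : Q') ^ (q % 2) * ((1, g2) : Q') ^ (r % 2) := by
    simpa [map_mul, map_pow, φ0_B, φ0_C] using hxy
  have h2 := key ⟨j % 2, Nat.mod_lt _ (by norm_num)⟩ ⟨q % 2, Nat.mod_lt _ (by norm_num)⟩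
    ⟨k % 2, Nat.mod_lt _ (by norm_num)⟩ ⟨r % 2, Nat.mod_lt _ (by norm_num)⟩ hQ
  rw [show j % 2 = q % 2 from congrArg Fin.val h2.1,
    show k % 2 = r % 2 from congrArg Fin.val h2.2]

end Amalgam
/-- The map `a ↦ (a,1)`, `b ↦ (b,1)`, `c ↦ (1,−1)` gives a surjection
`D₃ *_{C₂} D₂ → D₃ × C₂` injective on `⟨a,b⟩` and `⟨b,c⟩`, whose kernel is a
torsion-free normal subgroup of index 12, free of rank 2. -/
theorem stmt_18 (a b c : PresentedGroup amalgamRels)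
    (ha : a = PresentedGroup.of (rels := amalgamRels) 0)
    (hb : b = PresentedGroup.of (rels := amalgamRels) 1)
    (hc : c = PresentedGroup.of (rels := amalgamRels) 2) :
    ∃ φ : PresentedGroup amalgamRels →* Equiv.Perm (Fin 3) × Multiplicative (ZMod 2),
      Function.Surjective φ ∧
      (φ a).2 = 1 ∧ (φ b).2 = 1 ∧ φ c = (1, Multiplicative.ofAdd (1 : ZMod 2)) ∧
      Set.InjOn φ (Subgroup.closure {a, b} : Subgroup (PresentedGroup amalgamRels)) ∧
      Set.InjOn φ (Subgroup.closure {b, c} : Subgroup (PresentedGroup amalgamRels)) ∧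
      Monoid.IsTorsionFree ↥φ.ker ∧ φ.ker.Normal ∧ φ.ker.index = 12 ∧
      Nonempty (↥φ.ker ≃* FreeGroup (Fin 2)) := by
  subst ha hb hc
  refine ⟨Amalgam.φ0, Amalgam.φ0_surj, ?_, ?_, ?_, ?_, ?_, Amalgam.ker_torsionFree,
    Amalgam.φ0.normal_ker, Amalgam.ker_index, ⟨Amalgam.theIso⟩⟩
  · rw [show PresentedGroup.of (rels := amalgamRels) 0 = Amalgam.A from rfl, Amalgam.φ0_A]
  · rw [show PresentedGroup.of (rels := amalgamRels) 1 = Amalgam.B from rfl, Amalgam.φ0_B]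
  · exact Amalgam.φ0_C
  · exact Amalgam.injOn_ab
  · exact Amalgam.injOn_bc
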